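/- Let G be a free group and let a, b ∈ G satisfy the braid relation aba = bab. Then a = b. -/

import Mathlib

/-- Braid relator `x y x (y x y)⁻¹`. -/
def braidRel {α : Type} (x y : FreeGroup α) : FreeGroup α := x * y * x * (y * x * y)⁻¹

/-- Commutation relator `x y (y x)⁻¹`. -/
def commRel {α : Type} (x y : FreeGroup α) : FreeGroup α := x * y * (y * x)⁻¹

/-- Relators for the Artin group of type `A_m` on generators `s_1, …, s_m`
(0-based indices `0, …, m-1`). -/
def ArelA (m : ℕ) : Set (FreeGroup (Fin m)) :=
  {r | ∃ i j : Fin m,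
    (j.val = i.val + 1 ∧ r = braidRel (FreeGroup.of i) (FreeGroup.of j)) ∨
    (i.val + 2 ≤ j.val ∧ r = commRel (FreeGroup.of i) (FreeGroup.of j))}

/-- The Artin group of type `A_m` (braid group on `m+1` strands). -/
abbrev ArtinA (m : ℕ) := PresentedGroup (ArelA m)

/-- The generator `s_{i+1}` of `A[A_m]` (0-based index `i`; junk value `1` if `i ≥ m`). -/
def gA (m : ℕ) (i : ℕ) : ArtinA m :=
  if h : i < m then PresentedGroup.of ⟨i, h⟩ else 1

/-- 0-based adjacency in the Coxeter graph `D_n` on vertices `0, …, n-1`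
(vertex `i` corresponds to `t_{i+1}`): edges `(i, i+1)` for `i+1 ≤ n-2`
and the edge `(n-3, n-1)`. -/
def adjD (n : ℕ) (i j : ℕ) : Prop :=
  (j = i + 1 ∧ j ≤ n - 2) ∨ (i = n - 3 ∧ j = n - 1)

/-- Relators for the Artin group of type `D_n`: braid relation along each edge,
commutation for non-adjacent pairs. -/
def ArelD (n : ℕ) : Set (FreeGroup (Fin n)) :=
  {r | ∃ i j : Fin n, i.val < j.val ∧
    ((adjD n i.val j.val ∧ r = braidRel (FreeGroup.of i) (FreeGroup.of j)) ∨
     (¬ adjD n i.val j.val ∧ r = commRel (FreeGroup.of i) (FreeGroup.of j)))}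

/-- The Artin group of type `D_n`. -/
abbrev ArtinD (n : ℕ) := PresentedGroup (ArelD n)

/-- The generator `t_{i+1}` of `A[D_n]` (0-based index `i`; junk value `1` if `i ≥ n`). -/
def gD (n : ℕ) (i : ℕ) : ArtinD n :=
  if h : i < n then PresentedGroup.of ⟨i, h⟩ else 1

/-- The word `(s_m ⋯ s_1)(s_m ⋯ s_2) ⋯ (s_m s_{m-1}) s_m` (1-based) evaluated on
a family `s` of group elements (0-based). This is the Garside element of type `A_m`. -/
def deltaAin {G : Type} [Group G] (m : ℕ) (s : ℕ → G) : G :=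
  ((List.range m).map (fun k => ((List.range (m - k)).map (fun j => s (m - 1 - j))).prod)).prod

/-- The Garside element `Δ[A_m]`. -/
def deltaA (m : ℕ) : ArtinA m := deltaAin m (gA m)

/-- The factor `t_{k+1} ⋯ t_{n-2} t_{n-1} t_n t_{n-2} ⋯ t_{k+1}` (1-based) of `Δ[D_n]`,
0-based index `k`. -/
def factorD {G : Type} [Group G] (n : ℕ) (t : ℕ → G) (k : ℕ) : G :=
  ((List.range (n - 2 - k)).map (fun j => t (k + j))).prod * t (n - 2) * t (n - 1) *
    ((List.range (n - 2 - k)).map (fun j => t (n - 3 - j))).prod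

/-- The word giving the Garside element of type `D_n`, evaluated on a family `t`. -/
def deltaDin {G : Type} [Group G] (n : ℕ) (t : ℕ → G) : G :=
  ((List.range (n - 1)).map (factorD n t)).prod

/-- The Garside element `Δ[D_n]`. -/
def deltaD (n : ℕ) : ArtinD n := deltaDin n (gD n)

/-- The Garside element `Δ_Y` of the standard parabolic subgroup of `A[D_n]`
generated by `Y = {t_1, …, t_{n-1}}` (a copy of `A[A_{n-1}]`). -/
def deltaY (n : ℕ) : ArtinD n := deltaAin (n - 1) (gD n)

/-- `κ = 2` if `n` is odd and `κ = 1` if `n` is even. -/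
def kap (n : ℕ) : ℤ := if Odd n then 2 else 1

/-- The central quotient `A[D_n]/Z(A[D_n])`. -/
abbrev AZD (n : ℕ) := ArtinD n ⧸ Subgroup.center (ArtinD n)
section BraidAux
set_option linter.unusedSectionVars false

namespace BraidFree
open List FreeGroup

variable {α : Type}

@[simp] lemma chain'_nil {β : Type*} {S : β → β → Prop} : Chain' S [] := isChain_nil

lemma chain'_singleton {β : Type*} {S : β → β → Prop} (a : β) : Chain' S [a] :=
  isChain_singleton a

lemma chain'_cons {β : Type*} {S : β → β → Prop} {x y : β} {l : List β} :
    Chain' S (x :: y :: l) ↔ S x y ∧ Chain' S (y :: l) := isChain_cons_cons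

lemma chain'_cons' {β : Type*} {S : β → β → Prop} {x : β} {l : List β} :
    Chain' S (x :: l) ↔ (∀ y ∈ head? l, S x y) ∧ Chain' S l := isChain_cons

lemma chain'_append {β : Type*} {S : β → β → Prop} {l₁ l₂ : List β} :
    Chain' S (l₁ ++ l₂) ↔
      Chain' S l₁ ∧ Chain' S l₂ ∧ ∀ x ∈ l₁.getLast?, ∀ y ∈ l₂.head?, S x y := isChain_append

lemma chain'_reverse {β : Type*} {S : β → β → Prop} {l : List β} :
    Chain' S (reverse l) ↔ Chain' (flip S) l := isChain_reverse

lemma chain'_map {β γ : Type*} {S : β → β → Prop} (f : γ → β) {l : List γ} :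
    Chain' S (map f l) ↔ Chain' (fun a b : γ => S (f a) (f b)) l := isChain_map f

/-- No-cancellation relation between adjacent letters. -/
def R (p q : α × Bool) : Prop := ¬(p.1 = q.1 ∧ p.2 = !q.2)

/-- inverse of a letter -/
def iv (p : α × Bool) : α × Bool := (p.1, !p.2)

lemma R_iv_self (p : α × Bool) : ¬ R (iv p) p := by
  simp [R, iv]

lemma R_self_iv (p : α × Bool) : ¬ R p (iv p) := by
  simp [R, iv]

lemma iv_eq_of_not_R {p q : α × Bool} (h : ¬ R p q) : q = iv p := by
  simp only [R, not_not] at h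
  obtain ⟨h1, h2⟩ := h
  cases p; cases q; simp_all [iv]

lemma invRev_eq (L : List (α × Bool)) : invRev L = (L.map iv).reverse := rfl

lemma invRev_cons (p : α × Bool) (L : List (α × Bool)) :
    invRev (p :: L) = invRev L ++ [iv p] := by
  simp [invRev_eq]

lemma head?_invRev (L : List (α × Bool)) : (invRev L).head? = L.getLast?.map iv := by
  rw [invRev_eq, head?_reverse, getLast?_map]

lemma getLast?_invRev (L : List (α × Bool)) : (invRev L).getLast? = L.head?.map iv := by
  rw [invRev_eq, getLast?_reverse, head?_map]

lemma chain'_invRev {L : List (α × Bool)} (h : Chain' R L) : Chain' R (invRev L) := by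
  rw [invRev_eq, chain'_reverse, chain'_map]
  refine h.imp ?_
  rintro ⟨a, x⟩ ⟨b, y⟩ hr hc
  apply hr
  simp only [iv] at hc
  obtain ⟨h1, h2⟩ := hc
  exact ⟨h1.symm, by cases x <;> cases y <;> simp_all⟩

variable [DecidableEq α]

lemma reduce_eq_self {L : List (α × Bool)} (h : Chain' R L) : reduce L = L := by
  induction L with
  | nil => rfl
  | cons p L ih =>
    rw [reduce.cons, ih h.tail]
    cases L with
    | nil => rfl
    | cons q M =>
      have hr : R p q := (chain'_cons.mp h).1
      simp only [R] at hr
      simp [hr]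

lemma exists_pattern_of_not_chain' :
    ∀ (M : List (α × Bool)), ¬ Chain' R M →
      ∃ (L2 L3 : List (α × Bool)) (x : α) (b : Bool), M = L2 ++ (x, b) :: (x, !b) :: L3 := by
  intro M
  induction M with
  | nil => intro h; exact absurd chain'_nil h
  | cons p M ih =>
    intro h
    cases M with
    | nil => exact absurd (chain'_singleton p) h
    | cons q M' =>
      rw [chain'_cons] at h
      push_neg at h
      by_cases hr : R p q
      · obtain ⟨L2, L3, x, b, hM⟩ := ih (h hr)
        exact ⟨p :: L2, L3, x, b, by rw [hM]; rfl⟩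
      · have := iv_eq_of_not_R hr
        subst this
        exact ⟨[], M', p.1, p.2, by simp [iv]⟩

lemma chain'_reduce (L : List (α × Bool)) : Chain' R (reduce L) := by
  by_contra h
  obtain ⟨L2, L3, x, b, hM⟩ := exists_pattern_of_not_chain' _ h
  exact reduce.not hM


/-- `C` is nonempty implies junction conditions etc. -/
structure Good (U C : List (α × Bool)) : Prop where
  chainU : Chain' R U
  chainC : Chain' R C
  cyc : ∀ x ∈ C.getLast?, ∀ y ∈ C.head?, R x y
  jUC : ∀ x ∈ U.getLast?, ∀ y ∈ C.head?, R x y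
  jCU : ∀ x ∈ C.getLast?, ∀ y ∈ (invRev U).head?, R x y
  nilU : C = [] → U = []

/-- n-fold repetition of C -/
def rep (n : ℕ) (C : List (α × Bool)) : List (α × Bool) := (List.replicate n C).flatten

lemma rep_succ (n : ℕ) (C : List (α × Bool)) : rep (n+1) C = C ++ rep n C := by
  simp [rep, List.replicate_succ]

lemma rep_one (C : List (α × Bool)) : rep 1 C = C := by simp [rep]

lemma head?_rep {C : List (α × Bool)} (hC : C ≠ []) {n : ℕ} (hn : 1 ≤ n) :
    (rep n C).head? = C.head? := by
  obtain ⟨m, rfl⟩ := Nat.exists_eq_add_of_le hn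
  rw [add_comm, rep_succ, head?_append_of_ne_nil _ hC]

lemma rep_ne_nil {C : List (α × Bool)} (hC : C ≠ []) {n : ℕ} (hn : 1 ≤ n) :
    rep n C ≠ [] := by
  obtain ⟨m, rfl⟩ := Nat.exists_eq_add_of_le hn
  rw [add_comm, rep_succ]
  simp [hC]

lemma getLast?_rep {C : List (α × Bool)} (hC : C ≠ []) {n : ℕ} (hn : 1 ≤ n) :
    (rep n C).getLast? = C.getLast? := by
  induction n with
  | zero => omega
  | succ m ih =>
    rcases Nat.eq_or_lt_of_le hn with h1 | h1
    · rw [← h1]; simp [rep_one]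
    · have hm : 1 ≤ m := by omega
      rw [rep_succ, getLast?_append, ih hm, Option.or_self]

lemma chain'_rep {C : List (α × Bool)} (hch : Chain' R C)
    (hcyc : ∀ x ∈ C.getLast?, ∀ y ∈ C.head?, R x y) (n : ℕ) :
    Chain' R (rep n C) := by
  rcases eq_or_ne C [] with rfl | hC
  · simp [rep]
  induction n with
  | zero => simp [rep]
  | succ m ih =>
    rcases Nat.eq_zero_or_pos m with rfl | hm
    · simpa [rep_one] using hch
    rw [rep_succ, chain'_append]
    refine ⟨hch, ih, ?_⟩
    intro x hx y hy
    rw [head?_rep hC hm] at hy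
    exact hcyc x hx y hy

lemma good_chain {U C : List (α × Bool)} (h : Good U C) {n : ℕ} (hn : 1 ≤ n) :
    Chain' R (U ++ rep n C ++ invRev U) := by
  rcases eq_or_ne C [] with rfl | hC
  · have := h.nilU rfl
    subst this
    simp [rep, invRev]
  rw [chain'_append, chain'_append]
  refine ⟨⟨h.chainU, chain'_rep h.chainC h.cyc n, ?_⟩, chain'_invRev h.chainU, ?_⟩
  · intro x hx y hy
    rw [head?_rep hC hn] at hy
    exact h.jUC x hx y hy
  · intro x hx y hy
    rw [getLast?_append, getLast?_rep hC hn] at hx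
    rcases hlc : C.getLast? with _ | c
    · exact absurd (getLast?_eq_none_iff.mp hlc) hC
    · simp only [Option.mem_def, hlc, Option.or] at hx
      exact h.jCU x (Option.mem_def.mpr (hlc.trans hx)) y hy


lemma exists_decomp : ∀ (n : ℕ) (L : List (α × Bool)), L.length ≤ n → Chain' R L →
    ∃ U C, Good U C ∧ L = U ++ C ++ invRev U := by
  intro n
  induction n using Nat.strong_induction_on with
  | _ n ih =>
  intro L hlen hL
  by_cases hgood : ∀ x ∈ L.getLast?, ∀ y ∈ L.head?, R x y
  · refine ⟨[], L, ⟨chain'_nil, hL, hgood, by simp, ?_, fun _ => rfl⟩, by simp [invRev]⟩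
    simp [invRev]
  · push_neg at hgood
    obtain ⟨q, hq, p, hp, hnr⟩ := hgood
    have hpq : p = iv q := iv_eq_of_not_R hnr
    cases L with
    | nil => simp at hp
    | cons p' T =>
      have hp' : p = p' := by
        have : p' = p := by simpa using hp
        exact this.symm
      subst hp'
      rcases eq_nil_or_concat T with rfl | ⟨M, q', rfl⟩
      · have hq3 : p = q := by simpa using hq
        rw [← hq3] at hpq
        cases p with | mk a x => simp [iv] at hpq
      · have hq' : q = q' := by
          have h0 : ((p :: M) ++ [q']).getLast? = some q' := getLast?_concat
          simp only [concat_eq_append] at hq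
          rw [show p :: (M ++ [q']) = (p :: M) ++ [q'] from rfl] at hq
          rw [Option.mem_def.mp hq] at h0
          exact Option.some_injective _ h0
        subst hq'
        have hqp : q = iv p := by rw [hpq, iv, iv]; cases q; simp
        simp only [concat_eq_append] at hL hlen ⊢
        have hLsplit : p :: (M ++ [q]) = (p :: M) ++ [q] := rfl
        have hchainM : Chain' R M := by
          have h1 : Chain' R (M ++ [q]) := hL.tail
          exact (chain'_append.mp h1).1
        have hlenM : M.length < n := by
          simp only [length_cons, length_append, length_cons] at hlen
          omega
        obtain ⟨U', C', good', hM⟩ := ih M.length hlenM M le_rfl hchainM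
        have hheadM : ∀ y ∈ M.head?, R p y := by
          intro y hy
          have := (chain'_cons'.mp hL).1
          apply this
          rw [head?_append_of_ne_nil]
          · exact hy
          · rintro rfl; simp at hy
        refine ⟨p :: U', C', ⟨?_, good'.chainC, good'.cyc, ?_, ?_, ?_⟩, ?_⟩
        · -- Chain' R (p :: U')
          rw [chain'_cons']
          refine ⟨?_, good'.chainU⟩
          intro y hy
          apply hheadM
          rw [hM]
          rcases eq_or_ne U' [] with rfl | hU
          · simp at hy
          · rw [append_assoc, head?_append_of_ne_nil _ hU]; exact hy
        · -- jUC
          intro x hx y hy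
          rw [show p :: U' = [p] ++ U' from rfl, getLast?_append] at hx
          rcases hlu : U'.getLast? with _ | u
          · -- U' = []
            have hU : U' = [] := getLast?_eq_none_iff.mp hlu
            subst hU
            simp only [Option.mem_def, getLast?_nil, Option.or] at hx
            have hx' : x = p := by
              have h5 : p = x := by simpa using hx
              exact h5.symm
            subst hx'
            apply hheadM
            rw [hM]
            simpa using hy
          · simp only [Option.mem_def, hlu, Option.or] at hx
            exact good'.jUC x (by rw [hlu]; exact hx) y hy
        · -- jCU
          intro x hx y hy
          rw [invRev_cons, ← hqp] at hy
          rcases eq_or_ne U' [] with rfl | hU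
          · simp only [invRev_empty, nil_append] at hy
            have hy' : y = q := by
              have := Option.mem_def.mp hy
              simp only [head?_cons] at this
              exact (Option.some_injective _ this).symm
            subst hy'
            -- x = getLast C', C' = M; use junction of (p::M) ++ [q]
            have hjunc := (chain'_append.mp (hLsplit ▸ hL)).2.2
            apply hjunc
            · rw [show p :: M = [p] ++ M from rfl, getLast?_append]
              have : M.getLast? = some x := by
                rw [hM]; simpa using hx
              simp [this, Option.or]
            · simp
          · rw [head?_append_of_ne_nil] at hy
            · exact good'.jCU x hx y hy
            · simpa [invRev_eq] using hU
        · -- nilU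
          intro hC
          exfalso
          have hU : U' = [] := good'.nilU hC
          rw [hC, hU] at hM
          simp only [invRev_empty, append_nil, nil_append] at hM
          subst hM
          have : R p q := by
            have := (chain'_cons'.mp hL).1
            apply this; simp
          rw [hqp] at this
          exact R_self_iv p this
        · -- the equation
          rw [hM, invRev_cons, ← hqp]
          simp


lemma invRev_append (A B : List (α × Bool)) : invRev (A ++ B) = invRev B ++ invRev A := by
  simp [invRev_eq]

lemma chain'_toWord (x : FreeGroup α) : Chain' R x.toWord := by
  have := chain'_reduce (α := α) x.toWord
  rwa [reduce_toWord] at this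

lemma toWord_mk_eq {L : List (α × Bool)} (h : Chain' R L) : (mk L).toWord = L := by
  rw [toWord_mk, reduce_eq_self h]

lemma pow_toWord {U C : List (α × Bool)} (h : Good U C) {n : ℕ} (hn : 1 ≤ n) :
    ((mk U) * (mk C) ^ n * (mk U)⁻¹).toWord = U ++ rep n C ++ invRev U := by
  rw [pow_mk, inv_mk, mul_mk, mul_mk]
  exact toWord_mk_eq (good_chain h hn)

lemma decomp_unique_aux {U V P Q W : List (α × Bool)}
    (hW1 : W = U ++ P ++ invRev U) (hW2 : W = V ++ Q ++ invRev V)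
    (hcycP : ∀ x ∈ P.getLast?, ∀ y ∈ P.head?, R x y)
    (hlen : U.length ≤ V.length) : U = V := by
  have hpre1 : U <+: W := ⟨P ++ invRev U, by rw [hW1]; simp [append_assoc]⟩
  have hpre2 : V <+: W := ⟨Q ++ invRev V, by rw [hW2]; simp [append_assoc]⟩
  obtain ⟨U', rfl⟩ := prefix_of_prefix_length_le hpre1 hpre2 hlen
  have hP : P = U' ++ Q ++ invRev U' := by
    have he : U ++ (P ++ invRev U) = U ++ ((U' ++ Q ++ invRev U') ++ invRev U) := by
      have := hW1.symm.trans hW2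
      rw [invRev_append U U'] at this
      simpa [append_assoc] using this
    have := append_cancel_left he
    have := append_cancel_right (by simpa [append_assoc] using this :
      P ++ invRev U = (U' ++ Q ++ invRev U') ++ invRev U)
    exact this
  cases U' with
  | nil => simp
  | cons u0 U'' =>
    exfalso
    have hhead : P.head? = some u0 := by
      rw [hP]; rfl
    have hlast : P.getLast? = some (iv u0) := by
      rw [hP, append_assoc, getLast?_append]
      have : (invRev (u0 :: U'')).getLast? = some (iv u0) := by
        rw [getLast?_invRev]; rfl
      simp [this, Option.or]
    exact R_iv_self u0 (hcycP _ (Option.mem_def.mpr hlast) _ (Option.mem_def.mpr hhead))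


lemma exists_good (x : FreeGroup α) : ∃ U C, Good U C ∧ x.toWord = U ++ C ++ invRev U :=
  exists_decomp x.toWord.length x.toWord le_rfl (chain'_toWord x)

lemma rep_three (C : List (α × Bool)) : rep 3 C = C ++ (C ++ C) := by
  show (List.replicate 3 C).flatten = _
  simp [List.replicate]

lemma conj_cube {G : Type*} [Group G] (g c : G) : (g * c * g⁻¹) ^ 3 = g * c ^ 3 * g⁻¹ := by
  simp [pow_succ, mul_assoc]

lemma pow_three_inj (x y : FreeGroup α) (h : x ^ 3 = y ^ 3) : x = y := by
  obtain ⟨U, C, gC, hx⟩ := exists_good x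
  obtain ⟨V, D, gD, hy⟩ := exists_good y
  have hxe : x = mk U * mk C * (mk U)⁻¹ := by
    rw [← mk_toWord (x := x), hx, ← mul_mk, ← mul_mk, inv_mk]
  have hye : y = mk V * mk D * (mk V)⁻¹ := by
    rw [← mk_toWord (x := y), hy, ← mul_mk, ← mul_mk, inv_mk]
  have hx3 : (x ^ 3).toWord = U ++ rep 3 C ++ invRev U := by
    rw [hxe, conj_cube (mk U) (mk C)]
    exact pow_toWord gC (by norm_num)
  have hy3 : (y ^ 3).toWord = V ++ rep 3 D ++ invRev V := by
    rw [hye, conj_cube (mk V) (mk D)]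
    exact pow_toWord gD (by norm_num)
  have hW : U ++ rep 3 C ++ invRev U = V ++ rep 3 D ++ invRev V := by
    rw [← hx3, ← hy3, h]
  rcases eq_or_ne C [] with rfl | hC
  · have hU : U = [] := gC.nilU rfl
    subst hU
    simp only [rep_three, append_nil, nil_append, invRev_empty, append_assoc] at hW
    obtain ⟨hV, hrest⟩ := append_eq_nil_iff.mp hW.symm
    have hD : D = [] := (append_eq_nil_iff.mp hrest).1
    rw [hxe, hye, hV, hD]
  rcases eq_or_ne D [] with rfl | hD
  · have hV : V = [] := gD.nilU rfl
    subst hV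
    simp only [rep_three, append_nil, nil_append, invRev_empty, append_assoc] at hW
    obtain ⟨hU, hrest⟩ := append_eq_nil_iff.mp hW
    exact absurd (append_eq_nil_iff.mp hrest).1 hC
  have hcycC : ∀ a ∈ (rep 3 C).getLast?, ∀ b ∈ (rep 3 C).head?, R a b := by
    intro a ha b hb
    rw [getLast?_rep hC (by norm_num)] at ha
    rw [head?_rep hC (by norm_num)] at hb
    exact gC.cyc a ha b hb
  have hcycD : ∀ a ∈ (rep 3 D).getLast?, ∀ b ∈ (rep 3 D).head?, R a b := by
    intro a ha b hb
    rw [getLast?_rep hD (by norm_num)] at ha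
    rw [head?_rep hD (by norm_num)] at hb
    exact gD.cyc a ha b hb
  have hUV : U = V := by
    rcases le_total U.length V.length with hle | hle
    · exact decomp_unique_aux rfl hW hcycC hle
    · exact (decomp_unique_aux rfl hW.symm hcycD hle).symm
  subst hUV
  have hrep : rep 3 C = rep 3 D := by
    have h1 : U ++ (rep 3 C ++ invRev U) = U ++ (rep 3 D ++ invRev U) := by
      rw [← append_assoc, ← append_assoc]; exact hW
    exact append_cancel_right (append_cancel_left h1)
  have hlenCD : C.length = D.length := by
    have := congrArg List.length hrep
    simp only [rep_three, length_append] at this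
    omega
  have hCD : C = D := by
    have h1 : (rep 3 C).take C.length = C := by
      rw [rep_three]; exact take_left (l₁ := C) (l₂ := C ++ C)
    have h2 : (rep 3 D).take D.length = D := by
      rw [rep_three]; exact take_left (l₁ := D) (l₂ := D ++ D)
    rw [← h1, hrep, hlenCD, h2]
  rw [hxe, hye, hCD]

end BraidFree

theorem pow_three_injective {α : Type} (x y : FreeGroup α) (h : x ^ 3 = y ^ 3) : x = y := by
  letI := Classical.decEq α
  exact BraidFree.pow_three_inj x y h


end BraidAux

/-- In a free group, if `a b a = b a b` then `a = b`. -/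
theorem braid_rel_in_free_group {α : Type} (a b : FreeGroup α)
    (h : a * b * a = b * a * b) : a = b := by
  have e1 : (a * b) ^ 3 = (b * a) ^ 3 := by
    have h1 : (a * b) ^ 3 = (a * b * a) * (b * a * b) := by simp [pow_succ, mul_assoc]
    have h2 : (b * a) ^ 3 = (b * a * b) * (a * b * a) := by simp [pow_succ, mul_assoc]
    rw [h1, h2, h]
  have hab : a * b = b * a := pow_three_injective _ _ e1
  have k : a * (a * b) = a * (b * b) :=
    calc a * (a * b) = a * (b * a) := by rw [hab]
    _ = a * b * a := by simp [mul_assoc]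
    _ = b * a * b := h
    _ = a * b * b := by rw [← hab]
    _ = a * (b * b) := by simp [mul_assoc]
  exact mul_right_cancel (mul_left_cancel k)
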